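/- Let prob satisfy the preflow condition on a finite rooted tree T. Let X be an antichain in T and let Z ⊆ V be a set of vertices such that every x ∈ X has an ancestor belonging to Z. Then ∑_{z ∈ Z} prob(z) ≥ ∑_{x ∈ X} prob(x). -/
import Mathlib


open Finset

lemma aux_depth_eq {V : Type*} (root : V) (parent : V → V) (depth : V → ℕ)
    (hroot : parent root = root)
    (hdepth : ∀ u, u ≠ root → depth u = depth (parent u) + 1) :
    ∀ k (b : V), depth b = depth (parent^[k] b) + k ∨ parent^[k] b = root := by
  intro k
  induction k with
  | zero => intro b; left; simp
  | succ k ih =>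
    intro b
    rcases ih b with h | h
    · by_cases hb : parent^[k] b = root
      · right; rw [Function.iterate_succ_apply', hb, hroot]
      · left
        rw [Function.iterate_succ_apply', h, hdepth _ hb]
        ring
    · right; rw [Function.iterate_succ_apply', h, hroot]

lemma aux_depth_lt {V : Type*} (root : V) (parent : V → V) (depth : V → ℕ)
    (hroot : parent root = root) (hdepth_root : depth root = 0)
    (hdepth : ∀ u, u ≠ root → depth u = depth (parent u) + 1)
    {k : ℕ} {a b : V} (hk : parent^[k] b = a) (hne : a ≠ b) :
    depth a < depth b := by
  have hbroot : b ≠ root := by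
    rintro rfl
    exact hne (by rw [← hk, Function.iterate_fixed hroot])
  rcases aux_depth_eq root parent depth hroot hdepth k b with h | h
  · rw [hk] at h
    rcases Nat.eq_zero_or_pos k with rfl | hkpos
    · simp only [Function.iterate_zero, id_eq] at hk
      exact absurd hk.symm hne
    · omega
  · rw [hk] at h; subst h
    rw [hdepth_root]
    have := hdepth b hbroot
    omega

lemma aux_key {V : Type*} [Fintype V] [DecidableEq V]
    (root : V) (parent : V → V) (depth : V → ℕ)
    (hroot : parent root = root) (hdepth_root : depth root = 0)
    (hdepth : ∀ u, u ≠ root → depth u = depth (parent u) + 1)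
    (prob : V → ℝ) (hprob_nonneg : ∀ u, 0 ≤ prob u)
    (hpreflow : ∀ v, ∑ u ∈ univ.filter (fun u => u ≠ root ∧ parent u = v), prob u ≤ prob v) :
    ∀ n (X : Finset V) (z : V),
      (∀ x ∈ X, ∃ k : ℕ, parent^[k] x = z) →
      (∀ x ∈ X, ∀ y ∈ X, x ≠ y → ¬ (∃ k : ℕ, parent^[k] y = x)) →
      ∑ x ∈ X, depth x ≤ n →
      ∑ x ∈ X, prob x ≤ prob z := by
  intro n
  induction n using Nat.strong_induction_on with
  | _ n ih =>
  intro X z hanc hanti hn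
  rcases X.eq_empty_or_nonempty with rfl | hne
  · simpa using hprob_nonneg z
  by_cases hzX : z ∈ X
  · have hX : X = {z} := by
      apply Finset.eq_singleton_iff_unique_mem.mpr
      refine ⟨hzX, fun x hx => ?_⟩
      by_contra hxz
      obtain ⟨k, hk⟩ := hanc x hx
      exact hanti z hzX x hx (fun h => hxz h.symm) ⟨k, hk⟩
    simp [hX]
  · -- main case : z ∉ X, X nonempty
    have hXz : ∀ x ∈ X, x ≠ z := fun x hx h => hzX (h ▸ hx)
    have hXroot : ∀ x ∈ X, x ≠ root := by
      intro x hx heq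
      obtain ⟨k, hk⟩ := hanc x hx
      rw [heq, Function.iterate_fixed hroot] at hk
      subst hk
      rw [← heq] at hzX
      exact hzX hx
    set D := X.sup' hne depth with hD
    set Y := X.filter (fun x => depth x = D) with hYdef
    have hYsub : Y ⊆ X := Finset.filter_subset _ _
    have hYne : Y.Nonempty := by
      obtain ⟨x, hx, hxd⟩ := Finset.exists_mem_eq_sup' hne depth
      exact ⟨x, Finset.mem_filter.mpr ⟨hx, hxd.symm⟩⟩
    have hYmem : ∀ y ∈ Y, y ∈ X ∧ depth y = D := fun y hy => Finset.mem_filter.mp hy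
    set P := Y.image parent with hPdef
    have hPne : P.Nonempty := hYne.image parent
    have hPdepth : ∀ p ∈ P, depth p + 1 = D := by
      intro p hp
      obtain ⟨y, hy, rfl⟩ := Finset.mem_image.mp hp
      obtain ⟨hyX, hyD⟩ := hYmem y hy
      have := hdepth y (hXroot y hyX)
      omega
    have hPX : ∀ p ∈ P, p ∉ X := by
      intro p hp hpX
      obtain ⟨y, hy, rfl⟩ := Finset.mem_image.mp hp
      obtain ⟨hyX, _⟩ := hYmem y hy
      have hne' : parent y ≠ y := by
        intro h
        obtain ⟨k, hk⟩ := hanc y hyX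
        rw [Function.iterate_fixed h] at hk
        exact hXz y hyX hk
      exact hanti (parent y) hpX y hyX hne' ⟨1, by simp⟩
    set X' := (X \ Y) ∪ P with hX'def
    have hdisj : Disjoint (X \ Y) P := by
      rw [Finset.disjoint_left]
      intro a ha hp
      exact hPX a hp (Finset.mem_sdiff.mp ha).1
    -- ancestors for X'
    have hanc' : ∀ x ∈ X', ∃ k : ℕ, parent^[k] x = z := by
      intro x hx
      rcases Finset.mem_union.mp hx with h | h
      · exact hanc x (Finset.mem_sdiff.mp h).1
      · obtain ⟨y, hy, rfl⟩ := Finset.mem_image.mp h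
        obtain ⟨hyX, _⟩ := hYmem y hy
        obtain ⟨k, hk⟩ := hanc y hyX
        cases k with
        | zero => exact absurd hk (hXz y hyX)
        | succ m =>
          exact ⟨m, by rw [← Function.iterate_succ_apply]; exact hk⟩
    -- antichain for X'
    have hanti' : ∀ a ∈ X', ∀ b ∈ X', a ≠ b → ¬ (∃ k : ℕ, parent^[k] b = a) := by
      rintro a ha b hb hab ⟨k, hk⟩
      have hlt : depth a < depth b :=
        aux_depth_lt root parent depth hroot hdepth_root hdepth hk hab
      rcases Finset.mem_union.mp ha with haX | haP
      · obtain ⟨haX', haY⟩ := Finset.mem_sdiff.mp haX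
        rcases Finset.mem_union.mp hb with hbX | hbP
        · exact hanti a haX' b (Finset.mem_sdiff.mp hbX).1 hab ⟨k, hk⟩
        · obtain ⟨y, hy, rfl⟩ := Finset.mem_image.mp hbP
          obtain ⟨hyX, _⟩ := hYmem y hy
          have hay : a ≠ y := by rintro rfl; exact haY hy
          exact hanti a haX' y hyX hay
            ⟨k + 1, by rw [Function.iterate_succ_apply]; exact hk⟩
      · have hda : depth a + 1 = D := hPdepth a haP
        rcases Finset.mem_union.mp hb with hbX | hbP
        · obtain ⟨hbX', hbY⟩ := Finset.mem_sdiff.mp hbX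
          have hble : depth b ≤ D := Finset.le_sup' depth hbX'
          have hbne : depth b ≠ D := by
            intro h; exact hbY (Finset.mem_filter.mpr ⟨hbX', h⟩)
          omega
        · have hdb : depth b + 1 = D := hPdepth b hbP
          omega
    -- sum over Y bounded by sum over P
    have hYP : ∑ x ∈ Y, prob x ≤ ∑ p ∈ P, prob p := by
      rw [← Finset.sum_fiberwise_of_maps_to
        (fun x hx => Finset.mem_image_of_mem parent hx) prob]
      apply Finset.sum_le_sum
      intro p hp
      calc ∑ x ∈ Y.filter (fun x => parent x = p), prob x
          ≤ ∑ u ∈ univ.filter (fun u => u ≠ root ∧ parent u = p), prob u := by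
            apply Finset.sum_le_sum_of_subset_of_nonneg
            · intro x hx
              obtain ⟨hxY, hxp⟩ := Finset.mem_filter.mp hx
              exact Finset.mem_filter.mpr
                ⟨Finset.mem_univ x, hXroot x (hYmem x hxY).1, hxp⟩
            · intro u _ _; exact hprob_nonneg u
        _ ≤ prob p := hpreflow p
    -- depth measure drops
    have hPsum : ∑ p ∈ P, depth p = P.card * (D - 1) := by
      rw [Finset.sum_congr rfl (fun p hp => ?_), Finset.sum_const, smul_eq_mul]
      have := hPdepth p hp; omega
    have hYsum : ∑ y ∈ Y, depth y = Y.card * D := by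
      rw [Finset.sum_congr rfl (fun y hy => (hYmem y hy).2), Finset.sum_const,
        smul_eq_mul]
    have hD1 : 1 ≤ D := by
      obtain ⟨p, hp⟩ := hPne
      have := hPdepth p hp; omega
    have hYc : 0 < Y.card := Finset.card_pos.mpr hYne
    have hPYsum : ∑ p ∈ P, depth p < ∑ y ∈ Y, depth y := by
      rw [hPsum, hYsum]
      calc P.card * (D - 1) ≤ Y.card * (D - 1) :=
            Nat.mul_le_mul_right _ (Finset.card_image_le)
        _ < Y.card * D := mul_lt_mul_of_pos_left (by omega) hYc
    have hsplit : ∑ x ∈ X \ Y, depth x + ∑ x ∈ Y, depth x = ∑ x ∈ X, depth x :=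
      Finset.sum_sdiff hYsub
    have hX'depth : ∑ x ∈ X', depth x < n := by
      have h1 : ∑ x ∈ X', depth x = ∑ x ∈ X \ Y, depth x + ∑ p ∈ P, depth p :=
        Finset.sum_union hdisj
      omega
    have hsplitp : ∑ x ∈ X \ Y, prob x + ∑ x ∈ Y, prob x = ∑ x ∈ X, prob x :=
      Finset.sum_sdiff hYsub
    calc ∑ x ∈ X, prob x
        = ∑ x ∈ X \ Y, prob x + ∑ x ∈ Y, prob x := hsplitp.symm
      _ ≤ ∑ x ∈ X \ Y, prob x + ∑ p ∈ P, prob p := by linarith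
      _ = ∑ x ∈ X', prob x := (Finset.sum_union hdisj).symm
      _ ≤ prob z := ih _ hX'depth X' z hanc' hanti' le_rfl

/-- (Observation: tree preflow, second form.) If `prob`
satisfies the preflow condition on a finite rooted tree, `X` is an antichain
and every element of `X` has an ancestor in `Z`, then
`∑_{z ∈ Z} prob z ≥ ∑_{x ∈ X} prob x`. -/
theorem stmt_3 {V : Type*} [Fintype V] [DecidableEq V]
    (root : V) (parent : V → V) (depth : V → ℕ)
    (hroot : parent root = root)
    (hdepth_root : depth root = 0)
    (hdepth : ∀ u, u ≠ root → depth u = depth (parent u) + 1)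
    (prob : V → ℝ) (hprob_nonneg : ∀ u, 0 ≤ prob u)
    (hpreflow : ∀ v, ∑ u ∈ univ.filter (fun u => u ≠ root ∧ parent u = v), prob u ≤ prob v)
    (X : Finset V)
    (hanti : ∀ x ∈ X, ∀ y ∈ X, x ≠ y → ¬ (∃ k : ℕ, parent^[k] y = x))
    (Z : Finset V) (hZ : ∀ x ∈ X, ∃ z ∈ Z, ∃ k : ℕ, parent^[k] x = z) :
    ∑ x ∈ X, prob x ≤ ∑ z ∈ Z, prob z := by
  classical
  have hZ' : ∀ x : V, ∃ z : V, x ∈ X → z ∈ Z ∧ ∃ k : ℕ, parent^[k] x = z := by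
    intro x
    by_cases hx : x ∈ X
    · obtain ⟨z, hz, hk⟩ := hZ x hx
      exact ⟨z, fun _ => ⟨hz, hk⟩⟩
    · exact ⟨x, fun h => absurd h hx⟩
  choose g hg using hZ'
  rw [← Finset.sum_fiberwise_of_maps_to (fun x hx => (hg x hx).1) prob]
  apply Finset.sum_le_sum
  intro z hz
  apply aux_key root parent depth hroot hdepth_root hdepth prob hprob_nonneg hpreflow
    (∑ x ∈ X.filter (fun x => g x = z), depth x)
  · intro x hx
    obtain ⟨hxX, hxz⟩ := Finset.mem_filter.mp hx
    obtain ⟨_, k, hk⟩ := hg x hxX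
    exact ⟨k, by rw [hk, hxz]⟩
  · intro a ha b hb hab
    exact hanti a (Finset.mem_filter.mp ha).1 b (Finset.mem_filter.mp hb).1 hab
  · exact le_rfl
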